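/- Let q be a real number with q ≠ 1 and let G_K(t) = sinh((1−q)t)/(1−q) be the Kaniadakis group exponential. Under the same hypotheses as in the Fisher metric group theorem (p : ℝ^m → X → ℝ a positive parametrized family of probability densities, differentiation under the integral sign valid up to second order at θ₀ for A(θ) = ∫_X p(θ)(x) G_K(ln(p(θ)(x)/p(θ₀)(x))) dμ, and ∫_X ∂_j p(θ₀) dμ = 0 = ∫_X ∂_j ∂_k p(θ₀) dμ), the Hessian entry ∂_j ∂_k A(θ₀) equals the standard Fisher information matrix entry g_{jk}(θ₀); in particular G_K'(0) = 1 and G_K''(0) = 0, so the Kaniadakis class recovers exactly the ordinary Fisher metric. -/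

import Mathlib

open MeasureTheory

/-- (Fisher metric group, Kaniadakis class.) For the Kaniadakis group
exponential `G_K(t) = sinh((1-q)t)/(1-q)` with `q ≠ 1`, one has `G_K'(0) = 1`,
`G_K''(0) = 0`, and the Hessian at `θ = θ₀` of
`A(θ) = ∫ p(θ)(x) · G_K(ln (p(θ)(x)/p(θ₀)(x))) dμ` equals the standard Fisher
information matrix entry `g_{jk}(θ₀)`: the Kaniadakis class recovers exactly the
ordinary Fisher metric.

Here `p₁ i θ x` is the `i`-th first partial derivative of `θ ↦ p θ x`, `p₂` is the
mixed second partial `∂_j ∂_k p` at `θ₀`, `dA` is the partial derivative of `A` in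
the `k`-th direction (along the `j`-line through `θ₀`), and the hypotheses
`hq₁, hDUI₁, hq₂, hDUI₂` express that differentiation under the integral sign is
valid up to second order at `θ₀`. -/
theorem fisher_metric_group_kaniadakis
    {X : Type*} [MeasurableSpace X] (μ : Measure X) {m : ℕ}
    (q : ℝ) (hq : q ≠ 1) (G : ℝ → ℝ)
    (hG : ∀ t, G t = Real.sinh ((1 - q) * t) / (1 - q))
    (p : (Fin m → ℝ) → X → ℝ)
    -- `p` is a parametrized family of probability densities
    (hppos : ∀ θ : Fin m → ℝ, ∀ᵐ x ∂μ, 0 < p θ x)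
    (hpone : ∀ θ : Fin m → ℝ, ∫ x, p θ x ∂μ = 1)
    (θ₀ : Fin m → ℝ) (j k : Fin m)
    -- for μ-a.e. x, the map θ ↦ p θ x has first partial derivatives `p₁ i θ x` ...
    (p₁ : Fin m → (Fin m → ℝ) → X → ℝ)
    (hp₁ : ∀ᵐ x ∂μ, ∀ (i : Fin m) (θ : Fin m → ℝ),
      HasDerivAt (fun s => p (Function.update θ i s) x) (p₁ i θ x) (θ i))
    -- ... and the mixed second partial derivative `∂_j ∂_k p = p₂` at θ₀
    (p₂ : X → ℝ)
    (hp₂ : ∀ᵐ x ∂μ, HasDerivAt (fun s => p₁ k (Function.update θ₀ j s) x) (p₂ x) (θ₀ j))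
    -- `A θ = D_G(p θ ‖ p θ₀)`, and `dA = ∂_k A` along the j-line through θ₀
    (A dA : (Fin m → ℝ) → ℝ)
    (hA : ∀ θ, A θ = ∫ x, p θ x * G (Real.log (p θ x / p θ₀ x)) ∂μ)
    (hdA : ∀ s : ℝ, HasDerivAt
      (fun t => A (Function.update (Function.update θ₀ j s) k t))
      (dA (Function.update θ₀ j s)) (Function.update θ₀ j s k))
    -- differentiation under the integral sign is valid to first order ...
    (q₁ : ℝ → X → ℝ)
    (hq₁ : ∀ᵐ x ∂μ, ∀ s : ℝ, HasDerivAt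
      (fun t => p (Function.update (Function.update θ₀ j s) k t) x *
        G (Real.log (p (Function.update (Function.update θ₀ j s) k t) x / p θ₀ x)))
      (q₁ s x) (Function.update θ₀ j s k))
    (hDUI₁ : ∀ s : ℝ, dA (Function.update θ₀ j s) = ∫ x, q₁ s x ∂μ)
    -- ... and to second order at θ₀
    (q₂ : X → ℝ)
    (hq₂ : ∀ᵐ x ∂μ, HasDerivAt (fun s => q₁ s x) (q₂ x) (θ₀ j))
    (hDUI₂ : HasDerivAt (fun s => ∫ x, q₁ s x ∂μ) (∫ x, q₂ x ∂μ) (θ₀ j))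
    -- the integrals of the derivatives of `p` vanish at θ₀
    (hvan₁ : ∫ x, p₁ j θ₀ x ∂μ = 0)
    (hvan₂ : ∫ x, p₂ x ∂μ = 0)
    -- (integrability of the pieces)
    (hint₂ : Integrable p₂ μ)
    (hfish : Integrable
      (fun x => p θ₀ x * ((p₁ j θ₀ x / p θ₀ x) * (p₁ k θ₀ x / p θ₀ x))) μ) :
    deriv G 0 = 1 ∧ deriv (deriv G) 0 = 0 ∧
    HasDerivAt (fun s => dA (Function.update θ₀ j s))
      ((1 : ℝ) *
        ∫ x, p θ₀ x * ((p₁ j θ₀ x / p θ₀ x) * (p₁ k θ₀ x / p θ₀ x)) ∂μ)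
      (θ₀ j) := by

  have hc : (1 : ℝ) - q ≠ 0 := sub_ne_zero.mpr (Ne.symm hq)
  have hGe : G = fun t => Real.sinh ((1 - q) * t) / (1 - q) := funext hG
  subst hGe
  -- derivative facts for G
  have hGder : ∀ t : ℝ, HasDerivAt (fun u => Real.sinh ((1 - q) * u) / (1 - q))
      (Real.cosh ((1 - q) * t)) t := by
    intro t
    have h := (((hasDerivAt_id t).const_mul (1 - q)).sinh).div_const (1 - q)
    exact h.congr_deriv (by simp [hc])
  have hd1 : deriv (fun u => Real.sinh ((1 - q) * u) / (1 - q)) 0 = 1 := by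
    rw [(hGder 0).deriv]; simp
  have hderivG : deriv (fun u => Real.sinh ((1 - q) * u) / (1 - q))
      = fun t => Real.cosh ((1 - q) * t) := funext fun t => (hGder t).deriv
  have hd2 : deriv (deriv (fun u => Real.sinh ((1 - q) * u) / (1 - q))) 0 = 0 := by
    rw [hderivG]
    have h2 : HasDerivAt (fun t => Real.cosh ((1 - q) * t))
        (Real.sinh ((1 - q) * 0) * ((1 - q) * 1)) 0 := by
      simpa using ((hasDerivAt_id (0 : ℝ)).const_mul (1 - q)).cosh
    rw [h2.deriv]; simp
  refine ⟨hd1, hd2, ?_⟩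
  -- a.e. identification of q₂
  have key : ∀ᵐ x ∂μ, q₂ x =
      p₂ x + p θ₀ x * ((p₁ j θ₀ x / p θ₀ x) * (p₁ k θ₀ x / p θ₀ x)) := by
    filter_upwards [hp₁, hp₂, hppos θ₀, hq₁, hq₂] with x hx1 hx2 hx0 hxq1 hxq2
    have hp₀ne : p θ₀ x ≠ 0 := ne_of_gt hx0
    -- differentiability of p along the j-line
    have hgd : ∀ s : ℝ, HasDerivAt (fun u => p (Function.update θ₀ j u) x)
        (p₁ j (Function.update θ₀ j s) x) s := by
      intro s
      have h := hx1 j (Function.update θ₀ j s)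
      simpa [Function.update_idem] using h
    -- positivity near θ₀ j
    have hpos : ∀ᶠ s in nhds (θ₀ j), 0 < p (Function.update θ₀ j s) x := by
      have hcont := (hgd (θ₀ j)).continuousAt
      have h0 : 0 < p (Function.update θ₀ j (θ₀ j)) x := by
        simpa [Function.update_eq_self] using hx0
      exact hcont.eventually (eventually_gt_nhds h0)
    set φ : ℝ → ℝ := fun s => p₁ k (Function.update θ₀ j s) x *
        (Real.sinh ((1 - q) * Real.log (p (Function.update θ₀ j s) x / p θ₀ x)) / (1 - q)
         + Real.cosh ((1 - q) * Real.log (p (Function.update θ₀ j s) x / p θ₀ x))) with hφdef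
    -- q₁ agrees with φ near θ₀ j
    have heq : (fun s => q₁ s x) =ᶠ[nhds (θ₀ j)] φ := by
      filter_upwards [hpos] with s hs
      set θ' := Function.update θ₀ j s with hθ'
      have hne : p θ' x ≠ 0 := ne_of_gt hs
      have hfd : HasDerivAt (fun t => p (Function.update θ' k t) x)
          (p₁ k θ' x) (θ' k) := hx1 k θ'
      have hft0 : p (Function.update θ' k (θ' k)) x = p θ' x := by
        rw [Function.update_eq_self]
      have hlog : HasDerivAt
          (fun t => Real.log (p (Function.update θ' k t) x / p θ₀ x))
          ((p₁ k θ' x / p θ₀ x) / (p θ' x / p θ₀ x)) (θ' k) := by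
        have hdiv := hfd.div_const (p θ₀ x)
        have h := hdiv.log (by rw [hft0]; exact div_ne_zero hne hp₀ne)
        simpa [hft0] using h
      have hGL := ((hlog.const_mul (1 - q)).sinh).div_const (1 - q)
      have hF := hfd.mul hGL
      have huniq := (hxq1 s).unique hF
      rw [huniq, hφdef]
      simp only [hft0]
      field_simp
      ring
    -- derivative of φ at θ₀ j
    have hℓ : HasDerivAt (fun s => Real.log (p (Function.update θ₀ j s) x / p θ₀ x))
        (p₁ j θ₀ x / p θ₀ x) (θ₀ j) := by
      have hdiv := (hgd (θ₀ j)).div_const (p θ₀ x)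
      have h := hdiv.log (by
        simp [Function.update_eq_self, div_self hp₀ne])
      have h' : (p₁ j (Function.update θ₀ j (θ₀ j)) x / p θ₀ x) /
          (p (Function.update θ₀ j (θ₀ j)) x / p θ₀ x) = p₁ j θ₀ x / p θ₀ x := by
        simp [Function.update_eq_self, div_self hp₀ne]
      rwa [h'] at h
    have hΨ := (((hℓ.const_mul (1 - q)).sinh).div_const (1 - q)).add
        ((hℓ.const_mul (1 - q)).cosh)
    have hφd := hx2.mul hΨ
    have hq1d : HasDerivAt (fun s => q₁ s x)
        (p₂ x + p θ₀ x * ((p₁ j θ₀ x / p θ₀ x) * (p₁ k θ₀ x / p θ₀ x))) (θ₀ j) := by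
      refine HasDerivAt.congr_of_eventuallyEq ?_ heq
      refine hφd.congr_deriv ?_
      simp only [hφdef, Pi.add_apply, Function.update_eq_self, div_self hp₀ne, Real.log_one,
        mul_zero, Real.sinh_zero, Real.cosh_zero, zero_div]
      field_simp
      ring
    exact hxq2.unique hq1d
  -- the integral of q₂ is the Fisher information entry
  have hintq₂ : ∫ x, q₂ x ∂μ =
      ∫ x, p θ₀ x * ((p₁ j θ₀ x / p θ₀ x) * (p₁ k θ₀ x / p θ₀ x)) ∂μ := by
    rw [integral_congr_ae key, integral_add hint₂ hfish, hvan₂, zero_add]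
  have hfun : (fun s => dA (Function.update θ₀ j s))
      = fun s => ∫ x, q₁ s x ∂μ := funext hDUI₁
  rw [hfun, one_mul, ← hintq₂]
  exact hDUI₂
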